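/- Minimax channel inequality (Kuhn–Tucker-type condition): let 𝔚_Q = {W_Q : Q ∈ 𝒬} be a convex set of channels X → P(Y) where W_Q(y|x) = Σ_s Q(s) W_s(y|x) and 𝒬 ⊆ P(S) is convex. Let Q̃ ∈ 𝒬 minimize I(Q_X, W_{Q̃}) over 𝒬 for a fixed input distribution Q_X. Then for every Q ∈ 𝒬, Σ_{x,y} Q_X(x) W_Q(y|x) log( W_{Q̃}(y|x) / Q̃_Y(y) ) ≥ I(Q_X, W_{Q̃}), where Q̃_Y(y) = Σ_x Q_X(x) W_{Q̃}(y|x). -/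

import Mathlib

open Finset Filter Set Topology

theorem aux_deriv_nonneg {X Y : Type} [Fintype X] [Fintype Y]
    (QX : X → ℝ) (A B : X → Y → ℝ) (a b : Y → ℝ)
    (ha_def : ∀ y, a y = ∑ x, QX x * A x y)
    (hb_def : ∀ y, b y = ∑ x, QX x * B x y)
    (hA : ∀ x y, 0 < A x y) (ha : ∀ y, 0 < a y)
    (hmin : ∀ α ∈ Set.Ioc (0:ℝ) 1,
      (∑ x, ∑ y, QX x * (A x y) * Real.logb 2 (A x y / a y))
        ≤ ∑ x, ∑ y, QX x * (A x y + α * B x y) *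
            Real.logb 2 ((A x y + α * B x y) / (a y + α * b y))) :
    0 ≤ ∑ x, ∑ y, QX x * B x y * Real.logb 2 (A x y / a y) := by
  have hlog2 : Real.log 2 ≠ 0 := ne_of_gt (Real.log_pos (by norm_num))
  set g : ℝ → ℝ := fun α => ∑ x, ∑ y, QX x * (A x y + α * B x y) *
      Real.logb 2 ((A x y + α * B x y) / (a y + α * b y)) with hg_def
  set d : X → Y → ℝ := fun x y => QX x * (B x y * Real.logb 2 (A x y / a y)
      + (B x y - A x y * b y / a y) / Real.log 2) with hd_def
  -- per-term derivative
  have hterm : ∀ x y, HasDerivAt (fun α : ℝ => QX x * (A x y + α * B x y) *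
      Real.logb 2 ((A x y + α * B x y) / (a y + α * b y))) (d x y) 0 := by
    intro x y
    have hu : HasDerivAt (fun α : ℝ => A x y + α * B x y) (B x y) 0 := by
      simpa using ((hasDerivAt_id (0:ℝ)).mul_const (B x y)).const_add (A x y)
    have hp : HasDerivAt (fun α : ℝ => a y + α * b y) (b y) 0 := by
      simpa using ((hasDerivAt_id (0:ℝ)).mul_const (b y)).const_add (a y)
    have hp0 : a y + 0 * b y ≠ 0 := by simpa using (ha y).ne'
    have hq := hu.div hp hp0
    have hq0 : (A x y + 0 * B x y) / (a y + 0 * b y) ≠ 0 := by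
      have := div_pos (hA x y) (ha y); simpa using this.ne'
    have hlog := hq.log hq0
    have hlogb := hlog.div_const (Real.log 2)
    have hmul := (hu.const_mul (QX x)).mul hlogb
    simp only [Real.logb]
    refine HasDerivAt.congr_deriv hmul ?_
    symm
    have hAne := (hA x y).ne'
    have hane := (ha y).ne'
    simp only [hd_def, Real.logb, zero_mul, add_zero, mul_zero, Pi.div_apply]
    field_simp
  have hg : HasDerivAt g (∑ x, ∑ y, d x y) 0 :=
    HasDerivAt.fun_sum fun x _ => HasDerivAt.fun_sum fun y _ => hterm x y
  -- the sum of derivatives equals the target expression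
  have hd_sum : (∑ x, ∑ y, d x y)
      = ∑ x, ∑ y, QX x * B x y * Real.logb 2 (A x y / a y) := by
    have split : (∑ x, ∑ y, d x y)
        = (∑ x, ∑ y, QX x * B x y * Real.logb 2 (A x y / a y))
          + ∑ y, ∑ x, QX x * ((B x y - A x y * b y / a y) / Real.log 2) := by
      rw [Finset.sum_comm (s := Finset.univ) (t := Finset.univ)
        (f := fun y x => QX x * ((B x y - A x y * b y / a y) / Real.log 2)),
        ← Finset.sum_add_distrib]
      refine Finset.sum_congr rfl fun x _ => ?_
      rw [← Finset.sum_add_distrib]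
      exact Finset.sum_congr rfl fun y _ => by simp only [hd_def]; ring
    rw [split]
    have hzero : ∀ y, (∑ x, QX x * ((B x y - A x y * b y / a y) / Real.log 2)) = 0 := by
      intro y
      have hane := (ha y).ne'
      have : (∑ x, QX x * ((B x y - A x y * b y / a y) / Real.log 2))
          = ((∑ x, QX x * B x y) - (∑ x, QX x * A x y) * (b y / a y)) / Real.log 2 := by
        rw [eq_div_iff hlog2, Finset.sum_mul, Finset.sum_mul, ← Finset.sum_sub_distrib]
        refine Finset.sum_congr rfl fun x _ => ?_
        field_simp
      rw [this, ← ha_def, ← hb_def]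
      field_simp
      ring
    simp [hzero]
  rw [← hd_sum]
  -- derivative at 0 is a limit of nonnegative slopes
  have hslope : Tendsto (slope g 0) (𝓝[>] (0:ℝ)) (𝓝 (∑ x, ∑ y, d x y)) :=
    ((hasDerivAt_iff_tendsto_slope).1 hg).mono_left
      (nhdsWithin_mono 0 fun x hx => ne_of_gt hx)
  refine ge_of_tendsto hslope ?_
  filter_upwards [Ioo_mem_nhdsGT_of_mem (Set.left_mem_Ico.2 (by norm_num : (0:ℝ) < 1))]
    with α hα
  have hα0 : 0 < α := hα.1
  have hg0 : g 0 = ∑ x, ∑ y, QX x * (A x y) * Real.logb 2 (A x y / a y) := by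
    simp [hg_def]
  have hge : g 0 ≤ g α := by
    rw [hg0]; exact hmin α ⟨hα0, hα.2.le⟩
  rw [slope_def_field]
  simp only [sub_zero]
  exact div_nonneg (by linarith) hα0.le

/-- Minimax channel inequality (Kuhn–Tucker-type condition): if `Q̃ ∈ 𝒬` minimizes
`I(Q_X, W_Q)` over a convex set `𝒬` of state distributions, then for every `Q ∈ 𝒬`,
`Σ_{x,y} Q_X(x) W_Q(y|x) log(W_{Q̃}(y|x)/Q̃_Y(y)) ≥ I(Q_X, W_{Q̃})`. -/
theorem minimax_channel_inequality (X Y S : Type) [Fintype X] [Fintype Y] [Fintype S]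
    (W : S → X → Y → ℝ) (hW0 : ∀ s x y, 0 < W s x y) (hW1 : ∀ s x, ∑ y, W s x y = 1)
    (𝒬 : Set (S → ℝ)) (h𝒬 : Convex ℝ 𝒬)
    (hpmf : ∀ Q ∈ 𝒬, (∀ s, 0 ≤ Q s) ∧ ∑ s, Q s = 1)
    (QX : X → ℝ) (hQX0 : ∀ x, 0 ≤ QX x) (hQX1 : ∑ x, QX x = 1)
    (Qt : S → ℝ) (hQt : Qt ∈ 𝒬)
    (hmin : ∀ Q ∈ 𝒬,
      (∑ x, ∑ y, QX x * (∑ s, Qt s * W s x y) *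
          Real.logb 2 ((∑ s, Qt s * W s x y) / (∑ x', QX x' * (∑ s, Qt s * W s x' y))))
        ≤ ∑ x, ∑ y, QX x * (∑ s, Q s * W s x y) *
            Real.logb 2 ((∑ s, Q s * W s x y) / (∑ x', QX x' * (∑ s, Q s * W s x' y)))) :
    ∀ Q ∈ 𝒬,
      (∑ x, ∑ y, QX x * (∑ s, Q s * W s x y) *
          Real.logb 2 ((∑ s, Qt s * W s x y) / (∑ x', QX x' * (∑ s, Qt s * W s x' y))))
        ≥ ∑ x, ∑ y, QX x * (∑ s, Qt s * W s x y) *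
            Real.logb 2 ((∑ s, Qt s * W s x y) / (∑ x', QX x' * (∑ s, Qt s * W s x' y))) := by
  intro Q hQ
  obtain ⟨hQt0, hQt1⟩ := hpmf Qt hQt
  obtain ⟨hQ0, hQ1⟩ := hpmf Q hQ
  -- positivity
  have hexS : ∃ s, 0 < Qt s := by
    by_contra h
    push_neg at h
    have : ∑ s, Qt s ≤ 0 := Finset.sum_nonpos fun s _ => h s
    linarith
  have hexX : ∃ x, 0 < QX x := by
    by_contra h
    push_neg at h
    have : ∑ x, QX x ≤ 0 := Finset.sum_nonpos fun x _ => h x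
    linarith
  obtain ⟨s0, hs0⟩ := hexS
  obtain ⟨x0, hx0⟩ := hexX
  have hA : ∀ x y, 0 < ∑ s, Qt s * W s x y := fun x y =>
    Finset.sum_pos' (fun s _ => mul_nonneg (hQt0 s) (hW0 s x y).le)
      ⟨s0, Finset.mem_univ s0, mul_pos hs0 (hW0 s0 x y)⟩
  have ha : ∀ y, 0 < ∑ x, QX x * ∑ s, Qt s * W s x y := fun y =>
    Finset.sum_pos' (fun x _ => mul_nonneg (hQX0 x) (hA x y).le)
      ⟨x0, Finset.mem_univ x0, mul_pos hx0 (hA x0 y)⟩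
  -- mixture identities
  have hmix : ∀ (α : ℝ) (x : X) (y : Y),
      (∑ s, ((1 - α) * Qt s + α * Q s) * W s x y)
        = (∑ s, Qt s * W s x y) + α * ∑ s, (Q s - Qt s) * W s x y := by
    intro α x y
    calc (∑ s, ((1 - α) * Qt s + α * Q s) * W s x y)
        = ∑ s, (Qt s * W s x y + α * ((Q s - Qt s) * W s x y)) :=
          Finset.sum_congr rfl fun s _ => by ring
      _ = _ := by rw [Finset.sum_add_distrib, ← Finset.mul_sum]
  -- apply the auxiliary lemma
  have key := aux_deriv_nonneg QX
    (fun x y => ∑ s, Qt s * W s x y) (fun x y => ∑ s, (Q s - Qt s) * W s x y)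
    (fun y => ∑ x, QX x * ∑ s, Qt s * W s x y)
    (fun y => ∑ x, QX x * ∑ s, (Q s - Qt s) * W s x y)
    (fun y => rfl) (fun y => rfl) hA ha ?_
  · -- conclude from key
    rw [ge_iff_le, ← sub_nonneg, ← Finset.sum_sub_distrib]
    have : (∑ x, ((∑ y, QX x * (∑ s, Q s * W s x y) *
          Real.logb 2 ((∑ s, Qt s * W s x y) / (∑ x', QX x' * (∑ s, Qt s * W s x' y))))
        - ∑ y, QX x * (∑ s, Qt s * W s x y) *
          Real.logb 2 ((∑ s, Qt s * W s x y) / (∑ x', QX x' * (∑ s, Qt s * W s x' y)))))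
        = ∑ x, ∑ y, QX x * (∑ s, (Q s - Qt s) * W s x y) *
          Real.logb 2 ((∑ s, Qt s * W s x y) / (∑ x', QX x' * (∑ s, Qt s * W s x' y))) := by
      refine Finset.sum_congr rfl fun x _ => ?_
      rw [← Finset.sum_sub_distrib]
      refine Finset.sum_congr rfl fun y _ => ?_
      have hB : (∑ s, (Q s - Qt s) * W s x y)
          = (∑ s, Q s * W s x y) - (∑ s, Qt s * W s x y) := by
        rw [← Finset.sum_sub_distrib]
        exact Finset.sum_congr rfl fun s _ => by ring
      rw [hB]; ring
    rw [this]
    exact key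
  · -- the minimality hypothesis along the segment
    intro α hα
    have hQα : (fun s => (1 - α) * Qt s + α * Q s) ∈ 𝒬 := by
      exact h𝒬 hQt hQ (by linarith [hα.2] : (0:ℝ) ≤ 1 - α) hα.1.le (by ring)
    have h1 := hmin _ hQα
    refine le_trans h1 (le_of_eq ?_)
    have hmarg : ∀ y, (∑ x', QX x' * ∑ s, ((1 - α) * Qt s + α * Q s) * W s x' y)
        = (∑ x', QX x' * ∑ s, Qt s * W s x' y)
          + α * ∑ x', QX x' * ∑ s, (Q s - Qt s) * W s x' y := by
      intro y
      calc (∑ x', QX x' * ∑ s, ((1 - α) * Qt s + α * Q s) * W s x' y)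
          = ∑ x', (QX x' * (∑ s, Qt s * W s x' y)
              + α * (QX x' * ∑ s, (Q s - Qt s) * W s x' y)) :=
            Finset.sum_congr rfl fun x' _ => by rw [hmix α x' y]; ring
        _ = _ := by rw [Finset.sum_add_distrib, ← Finset.mul_sum]
    refine Finset.sum_congr rfl fun x _ => Finset.sum_congr rfl fun y _ => ?_
    rw [hmix α x y, hmarg y]
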